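/- Every language accepted in real time by a general counter machine is accepted in real time by a stateless counter machine (one with a single state), possibly using more counters. Hence stateless counter machines have the same linguistic capacity as general counter machines. -/

import Mathlib

/-- A counter update: add an integer, or reset to zero (the ×0 operation). -/
inductive CUpd where
  | add (m : ℤ)
  | reset
deriving DecidableEq

def CUpd.apply : CUpd → ℤ → ℤ
  | .add m, c => c + m
  | .reset, _ => 0

/-- A general real-time counter machine with states `Fin n` and `k` counters. -/
structure CM (σ : Type) (n k : ℕ) where
  q0 : Fin n
  u : σ → Fin n → (Fin k → Bool) → Fin k → CUpd
  δ : σ → Fin n → (Fin k → Bool) → Fin n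
  F : Set (Fin n × (Fin k → Bool))

/-- Elementwise zero-check: `false` if the counter is 0, `true` otherwise. -/
def zcheck {k : ℕ} (c : Fin k → ℤ) : Fin k → Bool :=
  fun i => decide (c i ≠ 0)

def CM.step {σ : Type} {n k : ℕ} (M : CM σ n k) (cfg : Fin n × (Fin k → ℤ)) (x : σ) :
    Fin n × (Fin k → ℤ) :=
  (M.δ x cfg.1 (zcheck cfg.2), fun i => (M.u x cfg.1 (zcheck cfg.2) i).apply (cfg.2 i))

/-- Real-time run: start at `⟨q₀, 0⟩` and take one transition per input token. -/
def CM.run {σ : Type} {n k : ℕ} (M : CM σ n k) (xs : List σ) : Fin n × (Fin k → ℤ) :=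
  xs.foldl M.step (M.q0, fun _ => 0)

def CM.accepts {σ : Type} {n k : ℕ} (M : CM σ n k) (xs : List σ) : Prop :=
  ((M.run xs).1, zcheck (M.run xs).2) ∈ M.F

def CM.acceptsLang {σ : Type} {n k : ℕ} (M : CM σ n k) (L : Set (List σ)) : Prop :=
  ∀ xs, M.accepts xs ↔ xs ∈ L

/-- An update is incremental if it is `×0` or adds a value in `{-1, 0, +1}`. -/
def CUpd.incremental : CUpd → Prop
  | .add m => m.natAbs ≤ 1
  | .reset => True

/-- A machine is simplified if its updates depend only on the input symbol and
are restricted to `{-1, +0, +1, ×0}`. -/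
def CM.simplified {σ : Type} {n k : ℕ} (M : CM σ n k) : Prop :=
  (∀ x q q' b b', M.u x q b = M.u x q' b') ∧ ∀ x q b i, (M.u x q b i).incremental

/-- The class of languages accepted in real time by general counter machines. -/
def CL (σ : Type) : Set (Set (List σ)) :=
  {L | ∃ n k, ∃ M : CM σ n k, M.acceptsLang L}

/-- The class of languages accepted in real time by stateless counter machines
(machines with a single state). -/
def QCL (σ : Type) : Set (Set (List σ)) :=
  {L | ∃ k, ∃ M : CM σ 1 k, M.acceptsLang L}

section Sim
variable {σ : Type} {n k : ℕ}

/-- Decode a one-hot zero-pattern into a state; all-false decodes to `q0`. -/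
noncomputable def decode (q0 : Fin n) (b : Fin n → Bool) : Fin n :=
  if h : ∃ j, b j = true then h.choose else q0

/-- The stateless simulation of `M`: `k` original counters plus `n` one-hot
state counters. -/
noncomputable def sim (M : CM σ n k) : CM σ 1 (k + n) where
  q0 := 0
  u := fun x _ b =>
    let bk : Fin k → Bool := fun i => b (Fin.castAdd n i)
    let bs : Fin n → Bool := fun j => b (Fin.natAdd k j)
    let q := decode M.q0 bs
    let next := M.δ x q bk
    Fin.addCases (fun i => M.u x q bk i)
      (fun j => if j = next then (if bs j then .add 0 else .add 1) else .reset)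
  δ := fun _ _ _ => 0
  F := {p | (decode M.q0 (fun j => p.2 (Fin.natAdd k j)),
             fun i => p.2 (Fin.castAdd n i)) ∈ M.F}

/-- The simulation invariant. -/
def SimInv (M : CM σ n k) (q : Fin n) (c : Fin k → ℤ) (c' : Fin (k + n) → ℤ) : Prop :=
  (∀ i, c' (Fin.castAdd n i) = c i) ∧
  (∀ j, c' (Fin.natAdd k j) = 0 ∨ c' (Fin.natAdd k j) = 1) ∧
  (∀ j, c' (Fin.natAdd k j) ≠ 0 → j = q) ∧
  ((∀ j, c' (Fin.natAdd k j) = 0) → q = M.q0)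

lemma decode_correct (M : CM σ n k) {q c c'} (h : SimInv M q c c') :
    decode M.q0 (fun j => zcheck c' (Fin.natAdd k j)) = q := by
  unfold decode
  split
  · next he =>
      have hs := he.choose_spec
      have hne : c' (Fin.natAdd k he.choose) ≠ 0 := by simpa [zcheck] using hs
      exact h.2.2.1 _ hne
  · next he =>
      push_neg at he
      have hz : ∀ j, c' (Fin.natAdd k j) = 0 := by
        intro j
        have := he j
        simpa [zcheck] using this
      exact (h.2.2.2 hz).symm

lemma zcheck_restrict (M : CM σ n k) {q c c'} (h : SimInv M q c c') :
    (fun i => zcheck c' (Fin.castAdd n i)) = zcheck c := by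
  funext i; simp [zcheck, h.1 i]

lemma SimInv_step (M : CM σ n k) {q c c'} (h : SimInv M q c c') (x : σ) (s : Fin 1) :
    SimInv M (M.step (q, c) x).1 (M.step (q, c) x).2 ((sim M).step (s, c') x).2 := by
  have hd := decode_correct M h
  have hr := zcheck_restrict M h
  have hu : ((sim M).step (s, c') x).2 = fun i =>
      ((sim M).u x s (zcheck c') i).apply (c' i) := rfl
  set next := M.δ x q (zcheck c) with hnext
  have key : ∀ i : Fin (k + n),
      ((sim M).step (s, c') x).2 i =
      (Fin.addCases (m := k) (n := n)
        (fun i => (M.u x q (zcheck c) i).apply (c' (Fin.castAdd n i)))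
        (fun j => if j = next then 1 else 0) i) := by
    intro i
    rw [hu]
    refine Fin.addCases (fun i => ?_) (fun j => ?_) i
    · simp only [sim, Fin.addCases_left, Fin.addCases_right, hd, hr]
    · simp only [sim, Fin.addCases_left, Fin.addCases_right, hd, hr]
      by_cases hj : j = next
      · simp only [hj, if_true]
        by_cases hz : c' (Fin.natAdd k next) ≠ 0
        · have : c' (Fin.natAdd k next) = 1 := (h.2.1 next).resolve_left hz
          simp [zcheck, hz, CUpd.apply, this, ← hnext]
        · push_neg at hz
          simp [zcheck, hz, CUpd.apply, ← hnext]
      · simp [hj, CUpd.apply, ← hnext]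
  have hstep1 : (M.step (q, c) x).1 = next := rfl
  have hstep2 : (M.step (q, c) x).2 = fun i => (M.u x q (zcheck c) i).apply (c i) := rfl
  refine ⟨fun i => ?_, fun j => ?_, fun j => ?_, fun hz => ?_⟩
  · rw [key, hstep2, Fin.addCases_left, h.1 i]
  · rw [key, Fin.addCases_right]
    by_cases hj : j = next <;> simp [hj]
  · rw [key, Fin.addCases_right]
    by_cases hj : j = next <;> simp [hj, hstep1]
  · exfalso
    have := hz next
    rw [key, Fin.addCases_right] at this
    simp at this

lemma SimInv_run (M : CM σ n k) (xs : List σ) :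
    SimInv M ((M.run xs).1) ((M.run xs).2) (((sim M).run xs).2) := by
  induction xs using List.reverseRecOn with
  | nil =>
      refine ⟨fun i => rfl, fun j => Or.inl rfl, fun j hj => absurd rfl hj, fun _ => rfl⟩
  | append_singleton xs x ih =>
      have h1 : M.run (xs ++ [x]) = M.step (M.run xs) x := by
        simp [CM.run, List.foldl_append]
      have h2 : (sim M).run (xs ++ [x]) = (sim M).step ((sim M).run xs) x := by
        simp [CM.run, List.foldl_append]
      rw [h1, h2]
      exact SimInv_step M ih x _

lemma sim_accepts (M : CM σ n k) (xs : List σ) :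
    (sim M).accepts xs ↔ M.accepts xs := by
  have h := SimInv_run M xs
  unfold CM.accepts
  show (decode M.q0 (fun j => zcheck (((sim M).run xs).2) (Fin.natAdd k j)),
        fun i => zcheck (((sim M).run xs).2) (Fin.castAdd n i)) ∈ M.F ↔ _
  rw [decode_correct M h, zcheck_restrict M h]

end Sim

/-- Stateless counter machines have the same real-time linguistic capacity as
general counter machines. -/
theorem stmt4 (σ : Type) : QCL σ = CL σ := by
  ext L
  constructor
  · rintro ⟨k, M, hM⟩
    exact ⟨1, k, M, hM⟩
  · rintro ⟨n, k, M, hM⟩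
    refine ⟨k + n, sim M, fun xs => ?_⟩
    rw [sim_accepts]
    exact hM xs
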